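/- Let r be a natural number, and for each n with 0 ≤ n ≤ r choose a subset S_n ⊆ Fin r of cardinality n. Then the r+1 flag vectors f(S_0), f(S_1), …, f(S_r) are linearly independent in the free real vector space on words of length r in {a,b}. -/

import Mathlib

/-- The flag vector of the 1-graph on `Fin r` with cell set `S`: the sum over
all shellings (permutations `σ`) of the basis vector at the word
`j ↦ (σ j ∈ S)`. -/
noncomputable def flagVector {r : ℕ} (S : Finset (Fin r)) : (Fin r → Bool) →₀ ℝ :=
  ∑ σ : Equiv.Perm (Fin r), Finsupp.single (fun j => decide (σ j ∈ S)) (1 : ℝ)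

open Finset

/-- There is a permutation carrying one finset of a given cardinality onto another. -/
lemma exists_perm_mapsTo {r : ℕ} (A B : Finset (Fin r)) (h : A.card = B.card) :
    ∃ σ : Equiv.Perm (Fin r), ∀ j, σ j ∈ B ↔ j ∈ A := by
  classical
  have hc : Aᶜ.card = Bᶜ.card := by simp [Finset.card_compl, h]
  have e := Finset.equivOfCardEq h
  have e' := Finset.equivOfCardEq hc
  have e'' : {a : Fin r // ¬ a ∈ A} ≃ {a : Fin r // ¬ a ∈ B} :=
    (Equiv.subtypeEquivRight (fun x => (Finset.mem_compl).symm)).trans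
      (e'.trans (Equiv.subtypeEquivRight fun x => Finset.mem_compl))
  refine ⟨Equiv.subtypeCongr e e'', fun j => ?_⟩
  by_cases hj : j ∈ A
  · simp only [Equiv.subtypeCongr, Equiv.trans_apply,
      Equiv.sumCompl_symm_apply_of_pos hj, Equiv.sumCongr_apply, Sum.map_inl,
      Equiv.sumCompl_apply_inl, hj, iff_true]
    exact (e ⟨j, hj⟩).2
  · simp only [Equiv.subtypeCongr, Equiv.trans_apply,
      Equiv.sumCompl_symm_apply_of_neg hj, Equiv.sumCongr_apply, Sum.map_inr,
      Equiv.sumCompl_apply_inr, hj, iff_false]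
    exact (e'' ⟨j, hj⟩).2

lemma flagVector_apply {r : ℕ} (S : Finset (Fin r)) (w : Fin r → Bool) :
    flagVector S w =
      ∑ σ : Equiv.Perm (Fin r), if (fun j => decide (σ j ∈ S)) = w then (1:ℝ) else 0 := by
  rw [flagVector, Finsupp.finset_sum_apply]
  exact Finset.sum_congr rfl fun σ _ => Finsupp.single_apply

/-- If the number of true letters of `w` differs from `S.card`, evaluation vanishes. -/
lemma flagVector_apply_eq_zero {r : ℕ} (S : Finset (Fin r)) (w : Fin r → Bool)
    (h : (Finset.univ.filter (fun j : Fin r => w j = true)).card ≠ S.card) :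
    flagVector S w = 0 := by
  rw [flagVector_apply]
  refine Finset.sum_eq_zero fun σ _ => ?_
  rw [if_neg]
  intro hw
  apply h
  have h1 : (Finset.univ.filter (fun j : Fin r => w j = true))
      = Finset.univ.filter (fun j : Fin r => σ j ∈ S) := by
    ext j
    simp [← hw]
  have h2 : (Finset.univ.filter (fun j : Fin r => σ j ∈ S)) = S.map σ.symm.toEmbedding := by
    ext j
    simp [Equiv.symm_apply_eq, eq_comm]
  rw [h1, h2, Finset.card_map]

/-- If for each `n ≤ r` we choose a cell set `S n` of cardinality `n`, the
resulting `r+1` flag vectors are linearly independent. -/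
theorem flagVectors_one_graphs_linearIndependent (r : ℕ)
    (S : Fin (r + 1) → Finset (Fin r)) (hS : ∀ n, (S n).card = (n : ℕ)) :
    LinearIndependent ℝ (fun n : Fin (r + 1) => flagVector (S n)) := by
  classical
  rw [Fintype.linearIndependent_iff]
  intro g hg n
  set w : Fin r → Bool := fun j => decide ((j : ℕ) < (n : ℕ)) with hw
  have hwcard : (Finset.univ.filter (fun j : Fin r => w j = true)).card = (n : ℕ) := by
    have hwe : (Finset.univ.filter (fun j : Fin r => w j = true))
        = (Finset.range (n : ℕ)).attachFin
          (fun m hm => lt_of_lt_of_le (Finset.mem_range.1 hm) (Nat.lt_succ_iff.1 n.2)) := by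
      ext j; simp [hw, Finset.mem_attachFin]
    rw [hwe, Finset.card_attachFin, Finset.card_range]
  have hev := congrArg (fun f : (Fin r → Bool) →₀ ℝ => f w) hg
  simp only [Finsupp.finset_sum_apply, Finsupp.smul_apply, Finsupp.coe_zero,
    Pi.zero_apply, smul_eq_mul] at hev
  rw [Finset.sum_eq_single n] at hev
  · obtain ⟨σ, hσ⟩ := exists_perm_mapsTo (Finset.univ.filter (fun j : Fin r => w j = true))
      (S n) (by rw [hwcard, hS n])
    have hword : (fun j => decide (σ j ∈ S n)) = w := by
      funext j
      have := hσ j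
      simp only [Finset.mem_filter, Finset.mem_univ, true_and] at this
      by_cases hj : w j = true
      · simp [this.2 hj, hj]
      · simp only [Bool.not_eq_true] at hj
        rw [hj, decide_eq_false]
        intro hmem
        exact absurd (this.1 hmem) (by simp [hj])
    have hpos : (0:ℝ) < flagVector (S n) w := by
      rw [flagVector_apply]
      refine Finset.sum_pos' (fun τ _ => by positivity) ⟨σ, Finset.mem_univ σ, ?_⟩
      rw [if_pos hword]; norm_num
    rcases mul_eq_zero.1 hev with h | h
    · exact h
    · exact absurd h (ne_of_gt hpos)
  · intro m _ hmn
    rw [flagVector_apply_eq_zero (S m) w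
      (by rw [hwcard, hS m]; exact fun h => hmn (Fin.ext h.symm)), mul_zero]
  · intro h
    exact absurd (Finset.mem_univ n) h
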